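/- The function g(μ) = μ + σ·φ(−μ/σ)/(1 − Φ(−μ/σ)) (for fixed σ > 0) is monotonically nondecreasing in μ. -/

import Mathlib

open MeasureTheory Set

/-- standard normal density -/
noncomputable def phi (x : ℝ) : ℝ := (Real.sqrt (2 * Real.pi))⁻¹ * Real.exp (-x ^ 2 / 2)

/-- standard normal CDF -/
noncomputable def Phi (x : ℝ) : ℝ := ∫ u in Iio x, phi u

open Real Filter Topology

lemma phi_pos (x : ℝ) : 0 < phi x := by
  have h : 0 < Real.sqrt (2 * Real.pi) := Real.sqrt_pos.2 (by positivity)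
  exact mul_pos (inv_pos.2 h) (Real.exp_pos _)

lemma phi_eq (x : ℝ) : phi x = (Real.sqrt (2 * Real.pi))⁻¹ * Real.exp (-(1/2) * x ^ 2) := by
  unfold phi
  congr 2
  ring

lemma continuous_phi : Continuous phi := by
  unfold phi
  exact continuous_const.mul ((continuous_pow 2).neg.div_const 2).rexp

lemma integrable_phi : Integrable phi := by
  rw [funext phi_eq]
  exact (integrable_exp_neg_mul_sq (by norm_num : (0:ℝ) < 1/2)).const_mul _

lemma integral_phi : ∫ x, phi x = 1 := by
  simp_rw [phi_eq]
  rw [integral_const_mul, integral_gaussian]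
  have h2 : Real.pi / (1/2) = 2 * Real.pi := by ring
  rw [h2]
  exact inv_mul_cancel₀ (ne_of_gt (Real.sqrt_pos.2 (by positivity)))

lemma one_sub_Phi (x : ℝ) : 1 - Phi x = ∫ u in Ioi x, phi u := by
  have h := intervalIntegral.integral_Iio_add_Ici (μ := volume) (b := x)
    integrable_phi.integrableOn integrable_phi.integrableOn
  rw [integral_phi] at h
  rw [← integral_Ici_eq_integral_Ioi]
  unfold Phi
  linarith

lemma one_sub_Phi_pos (x : ℝ) : 0 < 1 - Phi x := by
  rw [one_sub_Phi]
  apply setIntegral_pos_iff_support_of_nonneg_ae _ _ |>.mpr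
  · have : (Function.support phi) = univ := by
      ext t; simp [Function.mem_support, ne_of_gt (phi_pos t)]
    rw [this]
    simpa using measure_Ioi_pos (α := ℝ) _ x
  · filter_upwards with t using (phi_pos t).le
  · exact integrable_phi.integrableOn

lemma hasDerivAt_phi (x : ℝ) : HasDerivAt phi (-x * phi x) x := by
  have h : HasDerivAt (fun x : ℝ => -x ^ 2 / 2) (-x) x := by
    have := ((hasDerivAt_pow 2 x).neg).div_const 2
    refine this.congr_deriv ?_; push_cast; ring
  have := (h.exp).const_mul (Real.sqrt (2 * Real.pi))⁻¹
  refine this.congr_deriv ?_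
  unfold phi; ring

lemma integrable_id_mul_phi : Integrable (fun t : ℝ => t * phi t) := by
  have h := integrable_mul_exp_neg_mul_sq (b := 1/2) (by norm_num)
  have := h.const_mul (Real.sqrt (2 * Real.pi))⁻¹
  apply this.congr
  filter_upwards with t
  rw [phi_eq]; ring

lemma integrable_sq_mul_phi : Integrable (fun t : ℝ => t ^ 2 * phi t) := by
  have h := integrable_rpow_mul_exp_neg_mul_sq (b := 1/2) (by norm_num) (s := 2) (by norm_num)
  have := h.const_mul (Real.sqrt (2 * Real.pi))⁻¹
  apply this.congr
  filter_upwards with t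
  rw [phi_eq, show ((2:ℝ) = ((2:ℕ):ℝ)) by norm_num, Real.rpow_natCast]
  ring

lemma tendsto_phi_atTop : Tendsto phi atTop (𝓝 0) := by
  rw [show (0:ℝ) = (Real.sqrt (2 * Real.pi))⁻¹ * 0 by ring]
  apply Tendsto.const_mul
  apply Real.tendsto_exp_atBot.comp
  have : Tendsto (fun x : ℝ => x ^ 2 / 2) atTop atTop :=
    (tendsto_pow_atTop (by norm_num)).atTop_div_const (by norm_num)
  have h2 := tendsto_neg_atTop_atBot.comp this
  apply h2.congr
  intro x; simp [neg_div]

lemma tendsto_id_mul_phi_atTop : Tendsto (fun x : ℝ => x * phi x) atTop (𝓝 0) := by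
  have h := rpow_mul_exp_neg_mul_sq_isLittleO_exp_neg (b := 1/2) (by norm_num) 1
  have h2 : Tendsto (fun x : ℝ => x ^ (1:ℝ) * Real.exp (-(1/2) * x ^ 2)) atTop (𝓝 0) := by
    apply h.tendsto_zero_of_tendsto
    apply Real.tendsto_exp_atBot.comp
    apply Tendsto.const_mul_atTop_of_neg (by norm_num : -(1/2 : ℝ) < 0) tendsto_id
  have h3 := h2.const_mul (Real.sqrt (2 * Real.pi))⁻¹
  rw [mul_zero] at h3
  apply h3.congr'
  filter_upwards [eventually_ge_atTop (0:ℝ)] with x hx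
  rw [phi_eq, Real.rpow_one]; ring

lemma integral_Ioi_id_mul_phi (a : ℝ) : ∫ t in Ioi a, t * phi t = phi a := by
  have h := integral_Ioi_of_hasDerivAt_of_tendsto' (a := a) (f := fun t => -phi t)
    (f' := fun t => t * phi t) (m := 0)
    (fun x _ => (hasDerivAt_phi x).neg.congr_deriv (by ring))
    integrable_id_mul_phi.integrableOn
    (by simpa using tendsto_phi_atTop.neg)
  simpa using h

lemma integral_Ioi_sq_mul_phi (a : ℝ) :
    ∫ t in Ioi a, t ^ 2 * phi t = (1 - Phi a) + a * phi a := by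
  have hd : ∀ x ∈ Ici a, HasDerivAt (fun t => -(t * phi t)) (x ^ 2 * phi x - phi x) x := by
    intro x _
    have := ((hasDerivAt_id x).mul (hasDerivAt_phi x)).neg
    refine this.congr_deriv ?_
    simp only [id_eq]
    ring
  have hint : IntegrableOn (fun x : ℝ => x ^ 2 * phi x - phi x) (Ioi a) :=
    (integrable_sq_mul_phi.sub integrable_phi).integrableOn
  have h := integral_Ioi_of_hasDerivAt_of_tendsto' hd hint
    (by simpa using tendsto_id_mul_phi_atTop.neg)
  rw [integral_sub integrable_sq_mul_phi.integrableOn integrable_phi.integrableOn] at h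
  rw [← one_sub_Phi] at h
  simp only [zero_sub, neg_neg] at h
  linarith

lemma key_ineq (a : ℝ) : phi a ^ 2 ≤ (1 - Phi a) * ((1 - Phi a) + a * phi a) := by
  set m := 1 - Phi a with hm
  have hmpos : 0 < m := one_sub_Phi_pos a
  set c := phi a / m with hc
  have hnn : 0 ≤ ∫ t in Ioi a, (t - c) ^ 2 * phi t := by
    apply setIntegral_nonneg measurableSet_Ioi
    intro t _; exact mul_nonneg (sq_nonneg _) (phi_pos t).le
  have hexp : ∫ t in Ioi a, (t - c) ^ 2 * phi t
      = (∫ t in Ioi a, t ^ 2 * phi t) - 2 * c * (∫ t in Ioi a, t * phi t)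
        + c ^ 2 * (∫ t in Ioi a, phi t) := by
    have h1 : EqOn (fun t : ℝ => (t - c) ^ 2 * phi t)
        (fun t => (t ^ 2 * phi t - 2 * c * (t * phi t)) + c ^ 2 * phi t) (Ioi a) :=
      fun t _ => by ring
    have hI2 : Integrable (fun x : ℝ => 2 * c * (x * phi x)) :=
      integrable_id_mul_phi.const_mul (2 * c)
    have hI1 : Integrable (fun x : ℝ => x ^ 2 * phi x - 2 * c * (x * phi x)) :=
      integrable_sq_mul_phi.sub hI2
    have hI3 : Integrable (fun x : ℝ => c ^ 2 * phi x) := integrable_phi.const_mul (c ^ 2)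
    rw [setIntegral_congr_fun measurableSet_Ioi h1,
      integral_add hI1.integrableOn hI3.integrableOn,
      integral_sub integrable_sq_mul_phi.integrableOn hI2.integrableOn,
      integral_const_mul, integral_const_mul]
  rw [hexp, integral_Ioi_id_mul_phi, integral_Ioi_sq_mul_phi, ← one_sub_Phi, ← hm] at hnn
  have hc' : c * m = phi a := div_mul_cancel₀ _ (ne_of_gt hmpos)
  nlinarith [sq_nonneg (phi a), mul_pos hmpos hmpos]

lemma hasDerivAt_Phi (x : ℝ) : HasDerivAt Phi (phi x) x := by
  have hPhi : ∀ u : ℝ, Phi u = Phi (x - 1) + ∫ t in (x-1)..u, phi t := by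
    intro u
    have h := intervalIntegral.integral_Iic_sub_Iic (μ := volume) (f := phi)
      integrable_phi.integrableOn integrable_phi.integrableOn (a := x - 1) (b := u)
    rw [integral_Iic_eq_integral_Iio, integral_Iic_eq_integral_Iio] at h
    unfold Phi
    linarith
  have hd : HasDerivAt (fun u => ∫ t in (x-1)..u, phi t) (phi x) x := by
    apply intervalIntegral.integral_hasDerivAt_right
      integrable_phi.intervalIntegrable
      (continuous_phi.stronglyMeasurableAtFilter _ _)
      continuous_phi.continuousAt
  have := hd.const_add (Phi (x - 1))
  apply this.congr_of_eventuallyEq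
  filter_upwards with u using (hPhi u)

/-- the auxiliary function `h(α) = φ(α)/(1-Φ(α)) - α`, which is antitone. -/
noncomputable def hfun (α : ℝ) : ℝ := phi α / (1 - Phi α) - α

lemma hasDerivAt_hfun (α : ℝ) :
    HasDerivAt hfun
      ((-α * phi α * (1 - Phi α) + phi α * phi α) / (1 - Phi α) ^ 2 - 1) α := by
  have hm : (1 - Phi α) ≠ 0 := ne_of_gt (one_sub_Phi_pos α)
  have hden : HasDerivAt (fun a => 1 - Phi a) (-(phi α)) α := by
    simpa using (hasDerivAt_Phi α).const_sub 1
  have hdiv := (hasDerivAt_phi α).div hden hm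
  have := hdiv.sub (hasDerivAt_id α)
  refine this.congr_deriv ?_
  field_simp
  ring

lemma hfun_antitone : Antitone hfun := by
  apply antitone_of_deriv_nonpos
  · intro α
    exact (hasDerivAt_hfun α).differentiableAt
  · intro α
    rw [(hasDerivAt_hfun α).deriv]
    have hmpos := one_sub_Phi_pos α
    have hk := key_ineq α
    rw [div_sub_one (by positivity), div_nonpos_iff]
    right
    constructor
    · nlinarith
    · positivity

/-- For fixed `σ > 0`, `g(μ) = μ + σ·φ(−μ/σ)/(1 − Φ(−μ/σ))` is nondecreasing in `μ`. -/
theorem posterior_gap_monotone (σ : ℝ) (hσ : 0 < σ) :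
    Monotone (fun μ : ℝ => μ + σ * phi (-μ / σ) / (1 - Phi (-μ / σ))) := by
  have key : ∀ μ : ℝ, μ + σ * phi (-μ / σ) / (1 - Phi (-μ / σ)) = σ * hfun (-μ / σ) := by
    intro μ
    unfold hfun
    field_simp
    ring
  intro μ₁ μ₂ h
  simp only [key]
  apply mul_le_mul_of_nonneg_left _ hσ.le
  apply hfun_antitone
  have h2 : -μ₂ ≤ -μ₁ := by linarith
  exact (div_le_div_iff_of_pos_right hσ).mpr h2
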